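/- arXiv:2010.08902 — 8 statements merged into one kernel-verified Lean document; each statement's English description precedes it below -/
import Mathlib

section
/- In the group B_2(C_2), all symbols vanish; that is, B_2(C_2) = 0. -/
open FreeAbelianGroup

/-- A multiset of characters generates the character group. -/
def Adm {A : Type} [AddCommGroup A] (s : Multiset A) : Prop :=
  AddSubgroup.closure {x | x ∈ s} = ⊤

/-- Admissible symbols: multisets of `n` characters generating `A`. -/
def Symb (A : Type) [AddCommGroup A] (n : ℕ) : Type :=
  {s : Multiset A // Multiset.card s = n ∧ Adm s}

/-- The blow-up relations (B₂). -/
def blowupRels (A : Type) [AddCommGroup A] (n : ℕ) :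
    Set (FreeAbelianGroup (Symb A n)) :=
  {x | ∃ (a b : A) (t : Multiset A)
      (h : Multiset.card (a ::ₘ b ::ₘ t) = n ∧ Adm (a ::ₘ b ::ₘ t))
      (h1 : Multiset.card (a ::ₘ (b - a) ::ₘ t) = n ∧ Adm (a ::ₘ (b - a) ::ₘ t))
      (h2 : Multiset.card ((a - b) ::ₘ b ::ₘ t) = n ∧ Adm ((a - b) ::ₘ b ::ₘ t)),
      a ≠ b ∧
      x = of (⟨a ::ₘ b ::ₘ t, h⟩ : Symb A n) - of ⟨a ::ₘ (b - a) ::ₘ t, h1⟩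
            - of ⟨(a - b) ::ₘ b ::ₘ t, h2⟩} ∪
  {x | ∃ (a : A) (t : Multiset A)
      (h : Multiset.card (a ::ₘ a ::ₘ t) = n ∧ Adm (a ::ₘ a ::ₘ t))
      (h0 : Multiset.card ((0 : A) ::ₘ a ::ₘ t) = n ∧ Adm ((0 : A) ::ₘ a ::ₘ t)),
      x = of (⟨a ::ₘ a ::ₘ t, h⟩ : Symb A n) - of ⟨(0 : A) ::ₘ a ::ₘ t, h0⟩}

/-- The group of equivariant birational types `𝓑ₙ(G)`, for `A = G^∨`. -/
def B (A : Type) [AddCommGroup A] (n : ℕ) : Type :=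
  FreeAbelianGroup (Symb A n) ⧸ AddSubgroup.closure (blowupRels A n)

instance (A : Type) [AddCommGroup A] (n : ℕ) : AddCommGroup (B A n) := by
  unfold B; infer_instance

/-- The class of a symbol in `𝓑ₙ(G)`. -/
def symb {A : Type} [AddCommGroup A] {n : ℕ} (s : Multiset A)
    (h : Multiset.card s = n ∧ Adm s) : B A n :=
  QuotientAddGroup.mk (of (⟨s, h⟩ : Symb A n))

lemma adm_of_unit {N : ℕ} [NeZero N] {s : Multiset (ZMod N)} {u : ZMod N}
    (hu : u ∈ s) (h : IsUnit u) : Adm s := by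
  rw [Adm, AddSubgroup.eq_top_iff']
  intro x
  have hu' : u ∈ AddSubgroup.closure {y | y ∈ s} := AddSubgroup.subset_closure hu
  obtain ⟨v, hv⟩ := h.exists_left_inv
  have hx : x = (x * v).val • u := by
    rw [nsmul_eq_mul, ZMod.natCast_val, ZMod.cast_id, mul_assoc, hv, mul_one]
  rw [hx]
  exact AddSubgroup.nsmul_mem _ hu' _

lemma admU {N : ℕ} [NeZero N] {s : Multiset (ZMod N)} {u v : ZMod N}
    (hu : u ∈ s) (huv : u * v = 1) : Adm s :=
  adm_of_unit hu (isUnit_iff_exists_inv.mpr ⟨v, huv⟩)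

section B2C2aux

local notation "A2" => ZMod 2

lemma h01 : Multiset.card ((0:A2) ::ₘ 1 ::ₘ 0) = 2 ∧ Adm ((0:A2) ::ₘ 1 ::ₘ 0) :=
  ⟨by simp, admU (u := 1) (v := 1) (by simp) (by decide)⟩

lemma h11 : Multiset.card ((1:A2) ::ₘ 1 ::ₘ 0) = 2 ∧ Adm ((1:A2) ::ₘ 1 ::ₘ 0) :=
  ⟨by simp, admU (u := 1) (v := 1) (by simp) (by decide)⟩

lemma s11_mem : of (⟨(1:A2) ::ₘ 1 ::ₘ 0, h11⟩ : Symb A2 2) ∈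
    AddSubgroup.closure (blowupRels A2 2) := by
  have hm : ((0:A2) ::ₘ (1 - 0) ::ₘ 0) = ((0:A2) ::ₘ 1 ::ₘ 0) := by decide
  have hm' : (((0:A2) - 1) ::ₘ 1 ::ₘ 0) = ((1:A2) ::ₘ 1 ::ₘ 0) := by decide
  have hr : (of (⟨(0:A2) ::ₘ 1 ::ₘ 0, h01⟩ : Symb A2 2)
      - of ⟨(0:A2) ::ₘ (1 - 0) ::ₘ 0, hm ▸ h01⟩
      - of ⟨((0:A2) - 1) ::ₘ 1 ::ₘ 0, hm' ▸ h11⟩) ∈ blowupRels A2 2 := by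
    left
    exact ⟨0, 1, 0, h01, hm ▸ h01, hm' ▸ h11, by decide, rfl⟩
  have heq : (⟨(0:A2) ::ₘ (1 - 0) ::ₘ 0, hm ▸ h01⟩ : Symb A2 2)
      = ⟨(0:A2) ::ₘ 1 ::ₘ 0, h01⟩ := Subtype.ext hm
  have heq' : (⟨((0:A2) - 1) ::ₘ 1 ::ₘ 0, hm' ▸ h11⟩ : Symb A2 2)
      = ⟨(1:A2) ::ₘ 1 ::ₘ 0, h11⟩ := Subtype.ext hm'
  have := AddSubgroup.subset_closure hr
  rw [heq, heq'] at this
  have h2 := neg_mem this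
  erw [sub_self, zero_sub, neg_neg] at h2; exact h2

lemma s01_mem : of (⟨(0:A2) ::ₘ 1 ::ₘ 0, h01⟩ : Symb A2 2) ∈
    AddSubgroup.closure (blowupRels A2 2) := by
  have hr : (of (⟨(1:A2) ::ₘ 1 ::ₘ 0, h11⟩ : Symb A2 2)
      - of ⟨(0:A2) ::ₘ 1 ::ₘ 0, h01⟩) ∈ blowupRels A2 2 := by
    right
    exact ⟨1, 0, h11, h01, rfl⟩
  have h1 := AddSubgroup.subset_closure hr
  have := sub_mem s11_mem h1
  erw [sub_sub_cancel] at this; exact this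

lemma of_mem_closure (s : Symb A2 2) :
    of s ∈ AddSubgroup.closure (blowupRels A2 2) := by
  obtain ⟨m, hc, ha⟩ := s
  obtain ⟨a, b, rfl⟩ := Multiset.card_eq_two.mp hc
  have hab := (by decide : ∀ a b : A2,
    (a = 0 ∧ b = 0) ∨ (a = 0 ∧ b = 1) ∨ (a = 1 ∧ b = 0) ∨ (a = 1 ∧ b = 1)) a b
  rcases hab with ⟨rfl, rfl⟩ | ⟨rfl, rfl⟩ | ⟨rfl, rfl⟩ | ⟨rfl, rfl⟩
  · exfalso
    have h1 : (1 : A2) ∈ AddSubgroup.closure {x | x ∈ ({0, 0} : Multiset A2)} := by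
      rw [ha]; trivial
    have hle : AddSubgroup.closure {x | x ∈ ({0, 0} : Multiset A2)} ≤ ⊥ := by
      rw [AddSubgroup.closure_le]
      intro x hx
      simp only [Multiset.insert_eq_cons, Multiset.mem_cons, Multiset.mem_singleton] at hx
      rcases hx with h | h <;> simp [h]
    have h2 := hle h1
    rw [AddSubgroup.mem_bot] at h2
    exact one_ne_zero h2
  · have heq : (⟨({0, 1} : Multiset A2), hc, ha⟩ : Symb A2 2)
        = ⟨(0:A2) ::ₘ 1 ::ₘ 0, h01⟩ := Subtype.ext (by rfl)
    rw [heq]; exact s01_mem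
  · have heq : (⟨({1, 0} : Multiset A2), hc, ha⟩ : Symb A2 2)
        = ⟨(0:A2) ::ₘ 1 ::ₘ 0, h01⟩ := Subtype.ext (Multiset.cons_swap 1 0 0)
    rw [heq]; exact s01_mem
  · have heq : (⟨({1, 1} : Multiset A2), hc, ha⟩ : Symb A2 2)
        = ⟨(1:A2) ::ₘ 1 ::ₘ 0, h11⟩ := Subtype.ext (by rfl)
    rw [heq]; exact s11_mem

end B2C2aux

/-- `B₂(C₂) = 0`: all symbols (indeed all elements) vanish. -/
theorem B2_C2_trivial : ∀ x : B (ZMod 2) 2, x = 0 := by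
  intro x
  induction x using QuotientAddGroup.induction_on with
  | H y =>
    rw [show ((0 : B (ZMod 2) 2) = QuotientAddGroup.mk 0) from rfl]
    change (QuotientAddGroup.mk y : FreeAbelianGroup (Symb (ZMod 2) 2) ⧸
      AddSubgroup.closure (blowupRels (ZMod 2) 2)) = QuotientAddGroup.mk 0
    rw [QuotientAddGroup.eq]
    simp only [add_zero]
    refine neg_mem ?_
    refine FreeAbelianGroup.induction_on y (zero_mem _) of_mem_closure
      (fun s _ => neg_mem (of_mem_closure s)) (fun a b ha hb => add_mem ha hb)
end

section
/- The group B_2(C_2 × C_2) is isomorphic to the Klein four group Z/2 × Z/2, generated by the three symbols [χ_1,χ_2], [χ_1,χ_1+χ_2], [χ_1+χ_2,χ_2], each element of order at most 2, with each of these symbols equal to the sum of the other two. -/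
open FreeAbelianGroup

abbrev Klein := ZMod 2 × ZMod 2

lemma adm_klein {a b : Klein}
    (h : ∀ x : Klein, x = 0 ∨ x = a ∨ x = b ∨ x = a + b) :
    Adm ({a, b} : Multiset Klein) := by
  rw [Adm, AddSubgroup.eq_top_iff']
  intro x
  have ha : a ∈ AddSubgroup.closure {y | y ∈ ({a, b} : Multiset Klein)} :=
    AddSubgroup.subset_closure (by simp)
  have hb : b ∈ AddSubgroup.closure {y | y ∈ ({a, b} : Multiset Klein)} :=
    AddSubgroup.subset_closure (by simp)
  rcases h x with h | h | h | h <;> subst h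
  · exact zero_mem _
  · exact ha
  · exact hb
  · exact add_mem ha hb

def χ₁ : Klein := (1, 0)
def χ₂ : Klein := (0, 1)

def k12 : B Klein 2 := symb {χ₁, χ₂} ⟨by decide, adm_klein (by decide)⟩
def k13 : B Klein 2 := symb {χ₁, χ₁ + χ₂} ⟨by decide, adm_klein (by decide)⟩
def k23 : B Klein 2 := symb {χ₁ + χ₂, χ₂} ⟨by decide, adm_klein (by decide)⟩

/-! ### Auxiliary lemmas -/

lemma klein_add_self (x : Klein) : x + x = 0 := by revert x; decide

lemma klein_zsmul (z : ℤ) (x : Klein) : z • x = 0 ∨ z • x = x := by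
  rcases Int.even_or_odd z with ⟨k, hk⟩ | ⟨k, hk⟩
  · left; rw [hk, add_zsmul]; exact klein_add_self _
  · right
    rw [hk, add_zsmul, one_zsmul, two_mul, add_zsmul, klein_add_self, zero_add]

lemma set_pair (a b : Klein) :
    {y | y ∈ ({a, b} : Multiset Klein)} = ({a, b} : Set Klein) := by
  ext x; simp

lemma mem_quad {a b x : Klein}
    (hx : x ∈ AddSubgroup.closure {y | y ∈ ({a, b} : Multiset Klein)}) :
    x = 0 ∨ x = a ∨ x = b ∨ x = a + b := by
  rw [set_pair, AddSubgroup.mem_closure_pair] at hx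
  obtain ⟨m, n, hmn⟩ := hx
  rcases klein_zsmul m a with h1 | h1 <;> rcases klein_zsmul n b with h2 | h2 <;>
    rw [h1, h2] at hmn <;> subst hmn <;> simp

lemma symb_classify (s : Symb Klein 2) :
    s.1 = {χ₁, χ₂} ∨ s.1 = {χ₁, χ₁ + χ₂} ∨ s.1 = {χ₁ + χ₂, χ₂} := by
  obtain ⟨a, b, hab⟩ := Multiset.card_eq_two.mp s.2.1
  have hadm : Adm s.1 := s.2.2
  rw [hab] at hadm ⊢
  rw [Adm] at hadm
  have h1 : (χ₁ : Klein) ∈ AddSubgroup.closure {y | y ∈ ({a, b} : Multiset Klein)} := by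
    rw [hadm]; trivial
  have h2 : (χ₂ : Klein) ∈ AddSubgroup.closure {y | y ∈ ({a, b} : Multiset Klein)} := by
    rw [hadm]; trivial
  have key : ∀ a b : Klein, (χ₁ = 0 ∨ χ₁ = a ∨ χ₁ = b ∨ χ₁ = a + b) →
      (χ₂ = 0 ∨ χ₂ = a ∨ χ₂ = b ∨ χ₂ = a + b) →
      (({a, b} : Multiset Klein) = {χ₁, χ₂} ∨ ({a, b} : Multiset Klein) = {χ₁, χ₁ + χ₂} ∨
        ({a, b} : Multiset Klein) = {χ₁ + χ₂, χ₂}) := by decide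
  exact key a b (mem_quad h1) (mem_quad h2)

/-- The degenerate relations `[a,a,t]` do not occur for `n = 2`. -/
lemma no_degenerate (a : Klein) (t : Multiset Klein)
    (h : Multiset.card (a ::ₘ a ::ₘ t) = 2 ∧ Adm (a ::ₘ a ::ₘ t)) : False := by
  have ht : t = 0 := by
    have hc := h.1
    rw [Multiset.card_cons, Multiset.card_cons] at hc
    exact Multiset.card_eq_zero.mp (by omega)
  subst ht
  have hadm := h.2
  rw [Adm] at hadm
  have hsub : {y | y ∈ (a ::ₘ a ::ₘ (0 : Multiset Klein))} ⊆
      (AddSubgroup.zmultiples a : Set Klein) := by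
    intro y hy
    have : y = a := by simpa using hy
    rw [this]
    exact AddSubgroup.mem_zmultiples a
  have hle : AddSubgroup.closure {y | y ∈ (a ::ₘ a ::ₘ (0 : Multiset Klein))} ≤
      AddSubgroup.zmultiples a := (AddSubgroup.closure_le _).mpr hsub
  rw [hadm] at hle
  obtain ⟨m, hm⟩ := AddSubgroup.mem_zmultiples_iff.mp (hle (AddSubgroup.mem_top χ₁))
  obtain ⟨n, hn⟩ := AddSubgroup.mem_zmultiples_iff.mp (hle (AddSubgroup.mem_top χ₂))
  rcases klein_zsmul m a with e | e <;> rcases klein_zsmul n a with f | f <;>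
      rw [e] at hm <;> rw [f] at hn <;>
    first
      | exact absurd hm.symm (by decide)
      | exact absurd hn.symm (by decide)
      | exact absurd (hm.symm.trans hn) (by decide)

def symSum : Symb Klein 2 → Klein := fun s => s.1.sum

def F : FreeAbelianGroup (Symb Klein 2) →+ Klein := FreeAbelianGroup.lift symSum

lemma F_rels : blowupRels Klein 2 ⊆ (F.ker : Set (FreeAbelianGroup (Symb Klein 2))) := by
  rintro x (⟨a, b, t, h, h1, h2, hab, rfl⟩ | ⟨a, t, h, h0, rfl⟩)
  · have ht : t = 0 := by
      have hc := h.1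
      rw [Multiset.card_cons, Multiset.card_cons] at hc
      exact Multiset.card_eq_zero.mp (by omega)
    subst ht
    rw [SetLike.mem_coe, AddMonoidHom.mem_ker]
    simp only [F]
    erw [map_sub, map_sub, FreeAbelianGroup.lift_apply_of, FreeAbelianGroup.lift_apply_of,
      FreeAbelianGroup.lift_apply_of]
    simp only [symSum, Multiset.sum_cons, Multiset.sum_zero]
    abel
  · exact absurd h (fun h => no_degenerate a t h)

def φ : B Klein 2 →+ Klein :=
  QuotientAddGroup.lift _ F (fun x hx => ((AddSubgroup.closure_le _).mpr F_rels) hx)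

lemma φ_symb (s : Multiset Klein) (h : Multiset.card s = 2 ∧ Adm s) :
    φ (symb s h) = s.sum := by
  show F (of ⟨s, h⟩) = s.sum
  rw [F]
  exact FreeAbelianGroup.lift_apply_of _ _

lemma φ_k12 : φ k12 = χ₁ + χ₂ := by rw [k12, φ_symb]; decide
lemma φ_k13 : φ k13 = χ₂ := by rw [k13, φ_symb]; decide
lemma φ_k23 : φ k23 = χ₁ := by rw [k23, φ_symb]; decide

lemma symb_congr {s s' : Multiset Klein} {h : Multiset.card s = 2 ∧ Adm s}
    {h' : Multiset.card s' = 2 ∧ Adm s'} (e : s = s') : symb s h = symb s' h' := by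
  subst e; rfl

lemma symb_rel (a b : Klein) (t : Multiset Klein) (hab : a ≠ b)
    (h : Multiset.card (a ::ₘ b ::ₘ t) = 2 ∧ Adm (a ::ₘ b ::ₘ t))
    (h1 : Multiset.card (a ::ₘ (b - a) ::ₘ t) = 2 ∧ Adm (a ::ₘ (b - a) ::ₘ t))
    (h2 : Multiset.card ((a - b) ::ₘ b ::ₘ t) = 2 ∧ Adm ((a - b) ::ₘ b ::ₘ t)) :
    symb (a ::ₘ b ::ₘ t) h = symb (a ::ₘ (b - a) ::ₘ t) h1 + symb ((a - b) ::ₘ b ::ₘ t) h2 := by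
  have hr : (of (⟨a ::ₘ b ::ₘ t, h⟩ : Symb Klein 2) - of ⟨a ::ₘ (b - a) ::ₘ t, h1⟩
      - of ⟨(a - b) ::ₘ b ::ₘ t, h2⟩) ∈ AddSubgroup.closure (blowupRels Klein 2) :=
    AddSubgroup.subset_closure (Or.inl ⟨a, b, t, h, h1, h2, hab, rfl⟩)
  unfold symb
  erw [← QuotientAddGroup.mk_add, QuotientAddGroup.eq]
  have e : -(of (⟨a ::ₘ b ::ₘ t, h⟩ : Symb Klein 2) - of ⟨a ::ₘ (b - a) ::ₘ t, h1⟩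
      - of ⟨(a - b) ::ₘ b ::ₘ t, h2⟩) =
      -of (⟨a ::ₘ b ::ₘ t, h⟩ : Symb Klein 2) +
        (of (⟨a ::ₘ (b - a) ::ₘ t, h1⟩ : Symb Klein 2) + of ⟨(a - b) ::ₘ b ::ₘ t, h2⟩) := by
    abel
  erw [← e]
  exact neg_mem hr

lemma pair_pf {s : Multiset Klein} {a b : Klein} (e : s = {a, b})
    (h : ∀ x : Klein, x = 0 ∨ x = a ∨ x = b ∨ x = a + b) :
    Multiset.card s = 2 ∧ Adm s := by
  subst e; exact ⟨by simp, adm_klein h⟩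

lemma rel1 : k12 = k13 + k23 := by
  have h0 : Multiset.card (χ₁ ::ₘ χ₂ ::ₘ 0) = 2 ∧ Adm (χ₁ ::ₘ χ₂ ::ₘ (0 : Multiset Klein)) :=
    pair_pf rfl (by decide)
  have h1 := pair_pf (s := χ₁ ::ₘ (χ₂ - χ₁) ::ₘ 0) (a := χ₁) (b := χ₁ + χ₂) (by decide) (by decide)
  have h2 := pair_pf (s := (χ₁ - χ₂) ::ₘ χ₂ ::ₘ 0) (a := χ₁ + χ₂) (b := χ₂) (by decide) (by decide)
  calc k12 = symb (χ₁ ::ₘ χ₂ ::ₘ 0) h0 := symb_congr rfl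
    _ = symb (χ₁ ::ₘ (χ₂ - χ₁) ::ₘ 0) h1 + symb ((χ₁ - χ₂) ::ₘ χ₂ ::ₘ 0) h2 :=
        symb_rel χ₁ χ₂ 0 (by decide) h0 h1 h2
    _ = k13 + k23 := congrArg₂ (· + ·) (symb_congr (by decide)) (symb_congr (by decide))

lemma rel2 : k13 = k12 + k23 := by
  have h0 : Multiset.card (χ₁ ::ₘ (χ₁ + χ₂) ::ₘ 0) = 2 ∧
      Adm (χ₁ ::ₘ (χ₁ + χ₂) ::ₘ (0 : Multiset Klein)) := pair_pf rfl (by decide)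
  have h1 := pair_pf (s := χ₁ ::ₘ ((χ₁ + χ₂) - χ₁) ::ₘ 0) (a := χ₁) (b := χ₂) (by decide) (by decide)
  have h2 := pair_pf (s := (χ₁ - (χ₁ + χ₂)) ::ₘ (χ₁ + χ₂) ::ₘ 0) (a := χ₁ + χ₂) (b := χ₂)
    (by decide) (by decide)
  calc k13 = symb (χ₁ ::ₘ (χ₁ + χ₂) ::ₘ 0) h0 := symb_congr rfl
    _ = symb (χ₁ ::ₘ ((χ₁ + χ₂) - χ₁) ::ₘ 0) h1 +
        symb ((χ₁ - (χ₁ + χ₂)) ::ₘ (χ₁ + χ₂) ::ₘ 0) h2 :=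
        symb_rel χ₁ (χ₁ + χ₂) 0 (by decide) h0 h1 h2
    _ = k12 + k23 := congrArg₂ (· + ·) (symb_congr (by decide)) (symb_congr (by decide))

lemma rel3 : k23 = k12 + k13 := by
  have h0 : Multiset.card ((χ₁ + χ₂) ::ₘ χ₂ ::ₘ 0) = 2 ∧
      Adm ((χ₁ + χ₂) ::ₘ χ₂ ::ₘ (0 : Multiset Klein)) := pair_pf rfl (by decide)
  have h1 := pair_pf (s := (χ₁ + χ₂) ::ₘ (χ₂ - (χ₁ + χ₂)) ::ₘ 0) (a := χ₁) (b := χ₁ + χ₂)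
    (by decide) (by decide)
  have h2 := pair_pf (s := ((χ₁ + χ₂) - χ₂) ::ₘ χ₂ ::ₘ 0) (a := χ₁) (b := χ₂)
    (by decide) (by decide)
  calc k23 = symb ((χ₁ + χ₂) ::ₘ χ₂ ::ₘ 0) h0 := symb_congr rfl
    _ = symb ((χ₁ + χ₂) ::ₘ (χ₂ - (χ₁ + χ₂)) ::ₘ 0) h1 +
        symb (((χ₁ + χ₂) - χ₂) ::ₘ χ₂ ::ₘ 0) h2 :=
        symb_rel (χ₁ + χ₂) χ₂ 0 (by decide) h0 h1 h2
    _ = k13 + k12 := congrArg₂ (· + ·) (symb_congr (by decide)) (symb_congr (by decide))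
    _ = k12 + k13 := add_comm _ _

lemma two_k23 : k23 + k23 = 0 := by
  have h : k12 = k12 + (k23 + k23) := by
    conv_lhs => rw [rel1, rel2]
    abel
  exact (left_eq_add.mp h)

lemma two_k13 : k13 + k13 = 0 := by
  have h : k12 = k12 + (k13 + k13) := by
    conv_lhs => rw [rel1, rel3]
    abel
  exact left_eq_add.mp h

lemma two_k12 : k12 + k12 = 0 := by
  have h : k13 = k13 + (k12 + k12) := by
    conv_lhs => rw [rel2, rel3]
    abel
  exact left_eq_add.mp h

lemma mk_of_symb (s : Symb Klein 2) :
    (QuotientAddGroup.mk (of s) : B Klein 2) = k12 ∨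
    (QuotientAddGroup.mk (of s) : B Klein 2) = k13 ∨
    (QuotientAddGroup.mk (of s) : B Klein 2) = k23 := by
  obtain ⟨m, hm⟩ := s
  rcases symb_classify ⟨m, hm⟩ with e | e | e <;> simp only at e <;> subst e
  · exact Or.inl rfl
  · exact Or.inr (Or.inl rfl)
  · exact Or.inr (Or.inr rfl)

lemma gen_top : AddSubgroup.closure {k12, k13, k23} = (⊤ : AddSubgroup (B Klein 2)) := by
  rw [AddSubgroup.eq_top_iff']
  intro x
  obtain ⟨y, rfl⟩ : ∃ y : FreeAbelianGroup (Symb Klein 2),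
      (QuotientAddGroup.mk y : B Klein 2) = x := ⟨x.out, QuotientAddGroup.out_eq' x⟩
  induction y using FreeAbelianGroup.induction_on with
  | zero => exact zero_mem _
  | of s =>
    rcases mk_of_symb s with e | e | e <;> rw [e] <;>
      exact AddSubgroup.subset_closure (by simp)
  | neg s hs =>
    have : (QuotientAddGroup.mk (-of s) : B Klein 2) = -(QuotientAddGroup.mk (of s)) := rfl
    rw [this]
    exact neg_mem hs
  | add u v hu hv =>
    have : (QuotientAddGroup.mk (u + v) : B Klein 2) =
        QuotientAddGroup.mk u + QuotientAddGroup.mk v := rfl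
    rw [this]
    exact add_mem hu hv

def ψa : ZMod 2 →+ B Klein 2 :=
  ZMod.lift 2 ⟨zmultiplesHom _ k23, by
    show ((2 : ℕ) : ℤ) • k23 = 0
    rw [natCast_zsmul, two_nsmul]
    exact two_k23⟩

def ψb : ZMod 2 →+ B Klein 2 :=
  ZMod.lift 2 ⟨zmultiplesHom _ k13, by
    show ((2 : ℕ) : ℤ) • k13 = 0
    rw [natCast_zsmul, two_nsmul]
    exact two_k13⟩

def ψ : Klein →+ B Klein 2 :=
  ψa.comp (AddMonoidHom.fst _ _) + ψb.comp (AddMonoidHom.snd _ _)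

lemma ψa_one : ψa 1 = k23 := by
  have : (1 : ZMod 2) = ((1 : ℤ) : ZMod 2) := by decide
  rw [ψa, this, ZMod.lift_coe]
  simp [zmultiplesHom_apply]

lemma ψb_one : ψb 1 = k13 := by
  have : (1 : ZMod 2) = ((1 : ℤ) : ZMod 2) := by decide
  rw [ψb, this, ZMod.lift_coe]
  simp [zmultiplesHom_apply]

lemma ψ_apply (x y : ZMod 2) : ψ (x, y) = ψa x + ψb y := rfl

lemma right_inv_φψ (x : Klein) : φ (ψ x) = x := by
  obtain ⟨a, b⟩ := x
  have ha : a = 0 ∨ a = 1 := by revert a; decide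
  have hb : b = 0 ∨ b = 1 := by revert b; decide
  rcases ha with rfl | rfl <;> rcases hb with rfl | rfl <;>
    simp [ψ_apply, ψa_one, ψb_one, map_add, φ_k13, φ_k23] <;> decide

lemma left_inv_ψφ (x : B Klein 2) : ψ (φ x) = x := by
  obtain ⟨y, rfl⟩ : ∃ y : FreeAbelianGroup (Symb Klein 2),
      (QuotientAddGroup.mk y : B Klein 2) = x := ⟨x.out, QuotientAddGroup.out_eq' x⟩
  induction y using FreeAbelianGroup.induction_on with
  | zero =>
    have : (QuotientAddGroup.mk (0 : FreeAbelianGroup (Symb Klein 2)) : B Klein 2) = 0 := rfl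
    erw [this, map_zero]
    exact rfl
  | of s =>
    rcases mk_of_symb s with e | e | e <;> rw [e]
    · rw [φ_k12]
      have : (χ₁ + χ₂ : Klein) = (1, 1) := by decide
      rw [this, ψ_apply, ψa_one, ψb_one, rel1]
      exact add_comm _ _
    · rw [φ_k13]
      have : (χ₂ : Klein) = (0, 1) := by decide
      rw [this, ψ_apply, ψb_one, map_zero, zero_add]
    · rw [φ_k23]
      have : (χ₁ : Klein) = (1, 0) := by decide
      rw [this, ψ_apply, ψa_one, map_zero, add_zero]
  | neg s hs =>
    have : (QuotientAddGroup.mk (-of s) : B Klein 2) = -(QuotientAddGroup.mk (of s)) := rfl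
    erw [this, map_neg, map_neg, hs]
    exact rfl
  | add u v hu hv =>
    have : (QuotientAddGroup.mk (u + v) : B Klein 2) =
        QuotientAddGroup.mk u + QuotientAddGroup.mk v := rfl
    erw [this, map_add, map_add, hu, hv]
    exact rfl

def e : B Klein 2 ≃+ Klein :=
  { toFun := φ
    invFun := ψ
    left_inv := left_inv_ψφ
    right_inv := right_inv_φψ
    map_add' := map_add φ }

/-- `B₂(C₂ × C₂)` is the Klein four group, generated by the three
symbols `[χ₁,χ₂]`, `[χ₁,χ₁+χ₂]`, `[χ₁+χ₂,χ₂]`, each of order at most 2, and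
each equal to the sum of the other two. -/
theorem B2_Klein :
    (∃ φ : B Klein 2 ≃+ Klein, True) ∧
    AddSubgroup.closure {k12, k13, k23} = (⊤ : AddSubgroup (B Klein 2)) ∧
    2 • k12 = 0 ∧ 2 • k13 = 0 ∧ 2 • k23 = 0 ∧
    k12 = k13 + k23 ∧ k13 = k12 + k23 ∧ k23 = k12 + k13 :=
  ⟨⟨e, trivial⟩, gen_top, by rw [two_nsmul]; exact two_k12,
    by rw [two_nsmul]; exact two_k13, by rw [two_nsmul]; exact two_k23, rel1, rel2, rel3⟩
end

section
/- In B_2(G) for any finite abelian group G, any symbol containing two nonzero entries summing to zero vanishes: if a ≠ 0 then [a, -a] = 0 whenever this symbol is admissible (i.e., a and -a generate the character group). -/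
open FreeAbelianGroup

/-- in `B₂(G)` for any finite abelian `G`, an admissible symbol
with two nonzero entries summing to zero vanishes: `[a,-a] = 0`. -/
theorem symb_neg_self_eq_zero {A : Type} [AddCommGroup A] [Finite A]
    (a : A) (ha : a ≠ 0)
    (h : Multiset.card ({a, -a} : Multiset A) = 2 ∧ Adm ({a, -a} : Multiset A)) :
    symb {a, -a} h = 0 := by
  have hadm0 : Adm ((0:A) ::ₘ a ::ₘ 0) := by
    rw [Adm, eq_top_iff, ← h.2]
    apply (AddSubgroup.closure_le _).mpr
    intro x hx
    simp only [Set.mem_setOf_eq, Multiset.insert_eq_cons, Multiset.mem_cons,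
      Multiset.mem_singleton, Multiset.notMem_zero, or_false] at hx
    rcases hx with rfl | rfl
    · exact AddSubgroup.subset_closure (by simp)
    · exact neg_mem (AddSubgroup.subset_closure (by simp))
  have hadm2 : Adm (((0:A) - a) ::ₘ a ::ₘ 0) := by
    rw [Adm, eq_top_iff, ← h.2]
    apply (AddSubgroup.closure_le _).mpr
    intro x hx
    simp only [Set.mem_setOf_eq, Multiset.insert_eq_cons, Multiset.mem_cons,
      Multiset.mem_singleton, Multiset.notMem_zero, or_false] at hx
    rcases hx with rfl | rfl
    · exact AddSubgroup.subset_closure (by simp)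
    · exact AddSubgroup.subset_closure (by simp [zero_sub])
  have hC : Multiset.card ((0:A) ::ₘ a ::ₘ 0) = 2 ∧ Adm ((0:A) ::ₘ a ::ₘ 0) :=
    ⟨by simp, hadm0⟩
  have hC1 : Multiset.card ((0:A) ::ₘ (a - 0) ::ₘ 0) = 2 ∧ Adm ((0:A) ::ₘ (a - 0) ::ₘ 0) := by
    rw [sub_zero]; exact hC
  have hC2 : Multiset.card (((0:A) - a) ::ₘ a ::ₘ 0) = 2 ∧ Adm (((0:A) - a) ::ₘ a ::ₘ 0) :=
    ⟨by simp, hadm2⟩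
  have key : (of (⟨(0:A) ::ₘ a ::ₘ 0, hC⟩ : Symb A 2)
      - of ⟨(0:A) ::ₘ (a - 0) ::ₘ 0, hC1⟩ - of ⟨((0:A) - a) ::ₘ a ::ₘ 0, hC2⟩)
      ∈ AddSubgroup.closure (blowupRels A 2) :=
    AddSubgroup.subset_closure (Or.inl ⟨0, a, 0, hC, hC1, hC2, ha.symm, rfl⟩)
  have e1 : (⟨(0:A) ::ₘ (a - 0) ::ₘ 0, hC1⟩ : Symb A 2) = ⟨(0:A) ::ₘ a ::ₘ 0, hC⟩ :=
    Subtype.ext (by show (0:A) ::ₘ (a - 0) ::ₘ 0 = (0:A) ::ₘ a ::ₘ 0; rw [sub_zero])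
  have e2 : (⟨((0:A) - a) ::ₘ a ::ₘ 0, hC2⟩ : Symb A 2) = ⟨{a, -a}, h⟩ :=
    Subtype.ext (by show ((0:A) - a) ::ₘ a ::ₘ 0 = ({a, -a} : Multiset A); rw [zero_sub]; simp only [Multiset.insert_eq_cons, ← Multiset.cons_zero]; exact Multiset.cons_swap _ _ _)
  rw [e1, e2, sub_self] at key
  have key' : -(of (⟨{a, -a}, h⟩ : Symb A 2)) ∈ AddSubgroup.closure (blowupRels A 2) := by
    rw [← zero_sub]; exact key
  have key := neg_mem_iff.mp key'
  exact (QuotientAddGroup.eq_zero_iff _).mpr key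
end

section
/- In the quotient B_n^-(G) of B_n(G) by the antisymmetry relation [-a_1, a_2, ..., a_n] = -[a_1, a_2, ..., a_n], any symbol with a repeated entry vanishes: [a, a, a_3, ..., a_n]^- = 0, and any symbol with a zero entry vanishes: [0, a_2, ..., a_n]^- = 0. -/
open FreeAbelianGroup

/-- Antisymmetry relations: negating an entry negates the symbol. -/
def antiRels (A : Type) [AddCommGroup A] (n : ℕ) :
    Set (FreeAbelianGroup (Symb A n)) :=
  {x | ∃ (a : A) (t : Multiset A)
      (h : Multiset.card ((-a) ::ₘ t) = n ∧ Adm ((-a) ::ₘ t))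
      (h' : Multiset.card (a ::ₘ t) = n ∧ Adm (a ::ₘ t)),
      x = of (⟨(-a) ::ₘ t, h⟩ : Symb A n) + of ⟨a ::ₘ t, h'⟩}

/-- The antisymmetrized group `𝓑ₙ⁻(G)`. -/
def Bm (A : Type) [AddCommGroup A] (n : ℕ) : Type :=
  FreeAbelianGroup (Symb A n) ⧸ AddSubgroup.closure (blowupRels A n ∪ antiRels A n)

instance (A : Type) [AddCommGroup A] (n : ℕ) : AddCommGroup (Bm A n) := by
  unfold Bm; infer_instance

/-- The class of a symbol in `𝓑ₙ⁻(G)`. -/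
def symbm {A : Type} [AddCommGroup A] {n : ℕ} (s : Multiset A)
    (h : Multiset.card s = n ∧ Adm s) : Bm A n :=
  QuotientAddGroup.mk (of (⟨s, h⟩ : Symb A n))

lemma adm_mono' {A : Type} [AddCommGroup A] {s t : Multiset A}
    (hs : Adm s) (h : ∀ x ∈ s, x ∈ AddSubgroup.closure {y : A | y ∈ t}) :
    Adm t := by
  rw [Adm, eq_top_iff]
  rw [Adm] at hs
  rw [← hs]
  exact AddSubgroup.closure_le _ |>.mpr fun x hx => h x hx

lemma symbm_rel_zero {A : Type} [AddCommGroup A] {n : ℕ}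
    {x : FreeAbelianGroup (Symb A n)}
    (hx : x ∈ blowupRels A n ∪ antiRels A n) :
    (QuotientAddGroup.mk x : Bm A n) = 0 := by
  rw [QuotientAddGroup.eq_zero_iff]
  exact AddSubgroup.subset_closure hx

lemma symbm_mk_add {A : Type} [AddCommGroup A] {n : ℕ}
    (x y : FreeAbelianGroup (Symb A n)) :
    (QuotientAddGroup.mk (x + y) : Bm A n) =
      QuotientAddGroup.mk x + QuotientAddGroup.mk y := rfl

lemma symbm_mk_sub {A : Type} [AddCommGroup A] {n : ℕ}
    (x y : FreeAbelianGroup (Symb A n)) :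
    (QuotientAddGroup.mk (x - y) : Bm A n) =
      QuotientAddGroup.mk x - QuotientAddGroup.mk y := rfl

/-- Antisymmetry in `Bm`. -/
lemma symbm_neg {A : Type} [AddCommGroup A] {n : ℕ} (a : A) (t : Multiset A)
    (h : Multiset.card ((-a) ::ₘ t) = n ∧ Adm ((-a) ::ₘ t))
    (h' : Multiset.card (a ::ₘ t) = n ∧ Adm (a ::ₘ t)) :
    symbm ((-a) ::ₘ t) h = - symbm (a ::ₘ t) h' := by
  have h0 : symbm ((-a) ::ₘ t) h + symbm (a ::ₘ t) h' = 0 := by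
    rw [symbm, symbm]; erw [← symbm_mk_add]
    exact symbm_rel_zero (Or.inr ⟨a, t, h, h', rfl⟩)
  exact eq_neg_of_add_eq_zero_left h0

/-- The repeat blow-up relation in `Bm`. -/
lemma symbm_repeat {A : Type} [AddCommGroup A] {n : ℕ} (a : A) (t : Multiset A)
    (h : Multiset.card (a ::ₘ a ::ₘ t) = n ∧ Adm (a ::ₘ a ::ₘ t))
    (h0 : Multiset.card ((0 : A) ::ₘ a ::ₘ t) = n ∧ Adm ((0 : A) ::ₘ a ::ₘ t)) :
    symbm (a ::ₘ a ::ₘ t) h = symbm ((0 : A) ::ₘ a ::ₘ t) h0 := by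
  have hz : symbm (a ::ₘ a ::ₘ t) h - symbm ((0 : A) ::ₘ a ::ₘ t) h0 = 0 := by
    rw [symbm, symbm]; erw [← symbm_mk_sub]
    exact symbm_rel_zero (Or.inl (Or.inr ⟨a, t, h, h0, rfl⟩))
  exact sub_eq_zero.mp hz

/-- Key lemma: `[a, -a, t] = 0` in `Bm` for `a ≠ 0`. -/
lemma symbm_neg_pair {A : Type} [AddCommGroup A] {n : ℕ} (a : A) (ha : a ≠ 0)
    (t : Multiset A)
    (h : Multiset.card (a ::ₘ (-a) ::ₘ t) = n ∧ Adm (a ::ₘ (-a) ::ₘ t)) :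
    symbm (a ::ₘ (-a) ::ₘ t) h = 0 := by
  -- blow-up relation with pair (a, 0)
  have hadm : Adm (a ::ₘ (0 : A) ::ₘ t) := by
    refine adm_mono' h.2 ?_
    intro x hx
    rcases Multiset.mem_cons.mp hx with rfl | hx
    · exact AddSubgroup.subset_closure (Multiset.mem_cons_self _ _)
    rcases Multiset.mem_cons.mp hx with rfl | hx
    · exact neg_mem (AddSubgroup.subset_closure (Multiset.mem_cons_self _ _))
    · exact AddSubgroup.subset_closure (Multiset.mem_cons_of_mem
        (Multiset.mem_cons_of_mem hx))
  have hcard : Multiset.card (a ::ₘ (0 : A) ::ₘ t) = n := by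
    simpa using h.1
  have hmA : (a ::ₘ ((0 : A) - a) ::ₘ t) = a ::ₘ (-a) ::ₘ t := by rw [zero_sub]
  have hmB : ((a - (0 : A)) ::ₘ (0 : A) ::ₘ t) = a ::ₘ (0 : A) ::ₘ t := by
    rw [sub_zero]
  have h1 : Multiset.card (a ::ₘ ((0 : A) - a) ::ₘ t) = n ∧
      Adm (a ::ₘ ((0 : A) - a) ::ₘ t) := hmA ▸ h
  have h2 : Multiset.card ((a - (0 : A)) ::ₘ (0 : A) ::ₘ t) = n ∧
      Adm ((a - (0 : A)) ::ₘ (0 : A) ::ₘ t) := hmB ▸ ⟨hcard, hadm⟩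
  have hrel : (of (⟨a ::ₘ (0 : A) ::ₘ t, ⟨hcard, hadm⟩⟩ : Symb A n)
      - of ⟨a ::ₘ ((0 : A) - a) ::ₘ t, h1⟩
      - of ⟨(a - 0) ::ₘ (0 : A) ::ₘ t, h2⟩)
      ∈ blowupRels A n ∪ antiRels A n := by
    exact Or.inl (Or.inl ⟨a, 0, t, ⟨hcard, hadm⟩, h1, h2, ha, rfl⟩)
  have hz := symbm_rel_zero (A := A) (n := n) hrel
  erw [symbm_mk_sub, symbm_mk_sub] at hz
  have e1 : (⟨a ::ₘ ((0 : A) - a) ::ₘ t, h1⟩ : Symb A n)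
      = ⟨a ::ₘ (-a) ::ₘ t, h⟩ := Subtype.ext hmA
  have e2 : (⟨(a - (0 : A)) ::ₘ (0 : A) ::ₘ t, h2⟩ : Symb A n)
      = ⟨a ::ₘ (0 : A) ::ₘ t, ⟨hcard, hadm⟩⟩ := Subtype.ext hmB
  rw [e1, e2] at hz
  rw [symbm]
  exact sub_eq_self.mp (sub_eq_zero.mp hz)

lemma symbm_congr {A : Type} [AddCommGroup A] {n : ℕ} {s s' : Multiset A}
    (e : s = s') (h : Multiset.card s = n ∧ Adm s)
    (h' : Multiset.card s' = n ∧ Adm s') : symbm s h = symbm s' h' := by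
  subst e; rfl

lemma symbm_zero_cons {A : Type} [AddCommGroup A] [Nontrivial A] {n : ℕ}
    (t : Multiset A)
    (h : Multiset.card ((0 : A) ::ₘ t) = n ∧ Adm ((0 : A) ::ₘ t)) :
    symbm ((0 : A) ::ₘ t) h = 0 := by
  -- find a nonzero element of t
  obtain ⟨b, hbt, hb⟩ : ∃ b ∈ t, b ≠ 0 := by
    by_contra hc
    push_neg at hc
    have : {x : A | x ∈ (0 : A) ::ₘ t} ⊆ (⊥ : AddSubgroup A) := by
      intro x hx
      rcases Multiset.mem_cons.mp hx with rfl | hx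
      · exact (AddSubgroup.mem_bot).mpr rfl
      · exact (AddSubgroup.mem_bot).mpr (hc x hx)
    have hbot : AddSubgroup.closure {x : A | x ∈ (0 : A) ::ₘ t} ≤ ⊥ :=
      (AddSubgroup.closure_le _).mpr this
    rw [h.2] at hbot
    obtain ⟨y, hy⟩ := exists_ne (0 : A)
    exact hy ((AddSubgroup.mem_bot).mp (hbot (AddSubgroup.mem_top y)))
  obtain ⟨t', het⟩ := Multiset.exists_cons_of_mem hbt
  have e0 : (0 : A) ::ₘ t = (0 : A) ::ₘ b ::ₘ t' := by rw [het]
  have h0b : Multiset.card ((0 : A) ::ₘ b ::ₘ t') = n ∧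
      Adm ((0 : A) ::ₘ b ::ₘ t') := e0 ▸ h
  rw [symbm_congr e0 h h0b]
  -- admissibility of the variants
  have hmemcl : ∀ {u : Multiset A}, (∀ x ∈ ((0 : A) ::ₘ b ::ₘ t'), x ∈
      AddSubgroup.closure {y : A | y ∈ u}) → Adm u := fun hu => adm_mono' h0b.2 hu
  have hbb : Adm (b ::ₘ b ::ₘ t') := by
    refine hmemcl ?_
    intro x hx
    rcases Multiset.mem_cons.mp hx with rfl | hx
    · exact zero_mem _
    · exact AddSubgroup.subset_closure (Multiset.mem_cons_of_mem hx)
  have hcbb : Multiset.card (b ::ₘ b ::ₘ t') = n := by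
    have := h0b.1; simpa using this
  have hbnb : Adm (b ::ₘ (-b) ::ₘ t') := by
    refine hmemcl ?_
    intro x hx
    rcases Multiset.mem_cons.mp hx with rfl | hx
    · exact zero_mem _
    rcases Multiset.mem_cons.mp hx with rfl | hx
    · exact AddSubgroup.subset_closure (Multiset.mem_cons_self _ _)
    · exact AddSubgroup.subset_closure (Multiset.mem_cons_of_mem
        (Multiset.mem_cons_of_mem hx))
  have hcbnb : Multiset.card (b ::ₘ (-b) ::ₘ t') = n := by
    have := h0b.1; simpa using this
  have hswap : ((-b) ::ₘ b ::ₘ t') = b ::ₘ (-b) ::ₘ t' := Multiset.cons_swap _ _ _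
  have hnbb : Multiset.card ((-b) ::ₘ b ::ₘ t') = n ∧
      Adm ((-b) ::ₘ b ::ₘ t') := hswap ▸ ⟨hcbnb, hbnb⟩
  -- [b,b,t'] = -[(-b),b,t'] via antisymmetry at first entry
  have hneg : symbm ((-(-b)) ::ₘ b ::ₘ t')
        (by rw [neg_neg]; exact ⟨hcbb, hbb⟩)
      = - symbm ((-b) ::ₘ b ::ₘ t') hnbb := symbm_neg (-b) (b ::ₘ t') _ _
  have hbb0 : symbm (b ::ₘ b ::ₘ t') ⟨hcbb, hbb⟩ = 0 := by
    have e : ((-(-b)) ::ₘ b ::ₘ t') = b ::ₘ b ::ₘ t' := by rw [neg_neg]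
    rw [symbm_congr e.symm ⟨hcbb, hbb⟩ (by rw [neg_neg]; exact ⟨hcbb, hbb⟩), hneg,
      symbm_congr hswap hnbb ⟨hcbnb, hbnb⟩,
      symbm_neg_pair b hb t' ⟨hcbnb, hbnb⟩, neg_zero]
  rw [← symbm_repeat b t' ⟨hcbb, hbb⟩ h0b]
  exact hbb0

/-- in `𝓑ₙ⁻(G)` every symbol with a repeated entry vanishes, and
every symbol with a zero entry vanishes. -/
theorem symbm_repeat_and_zero_vanish {A : Type} [AddCommGroup A] [Finite A]
    [Nontrivial A] {n : ℕ} :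
    (∀ (a : A) (t : Multiset A)
      (h : Multiset.card (a ::ₘ a ::ₘ t) = n ∧ Adm (a ::ₘ a ::ₘ t)),
      symbm (a ::ₘ a ::ₘ t) h = 0) ∧
    (∀ (t : Multiset A)
      (h : Multiset.card ((0 : A) ::ₘ t) = n ∧ Adm ((0 : A) ::ₘ t)),
      symbm ((0 : A) ::ₘ t) h = 0) := by
  constructor
  · intro a t h
    have hadm0 : Adm ((0 : A) ::ₘ a ::ₘ t) := by
      refine adm_mono' h.2 ?_
      intro x hx
      rcases Multiset.mem_cons.mp hx with rfl | hx
      · exact AddSubgroup.subset_closure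
          (Multiset.mem_cons_of_mem (Multiset.mem_cons_self _ _))
      · exact AddSubgroup.subset_closure (Multiset.mem_cons_of_mem hx)
    have hcard0 : Multiset.card ((0 : A) ::ₘ a ::ₘ t) = n := by
      have := h.1; simpa using this
    rw [symbm_repeat a t h ⟨hcard0, hadm0⟩]
    exact symbm_zero_cons (a ::ₘ t) ⟨hcard0, hadm0⟩
  · intro t h
    exact symbm_zero_cons t h
end

section
/- For n ≥ 2, all higher blow-up relations (B_r) for 2 ≤ r ≤ n are implied by the two-term blow-up relation (B_2) together with the symmetry relations. Precisely: in the free abelian group on symmetric symbols [a_1,...,a_n] satisfying the generation condition, modulo the relations (B_2), the relation [a_1,...,a_r,b_1,...,b_{n-r}] = Σ_{i: a_i ∉ {a_1,...,a_{i-1}}} [a_1 - a_i, ..., a_i, ..., a_r - a_i, b_1, ..., b_{n-r}] holds for every r with 2 ≤ r ≤ n. -/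
open FreeAbelianGroup

section Aux

variable {A : Type} [AddCommGroup A]

/-- The subgroup generated by the entries of a multiset. -/
private def MSpan (s : Multiset A) : AddSubgroup A := AddSubgroup.closure {x | x ∈ s}

private lemma adm_congr {s s' : Multiset A} (e : MSpan s = MSpan s') (h : Adm s) : Adm s' := by
  unfold Adm at *
  unfold MSpan at e
  rw [← e]; exact h

private lemma mspan_shift (b : A) (s u : Multiset A) :
    MSpan (b ::ₘ Multiset.map (fun x => x - b) s + u) = MSpan (b ::ₘ s + u) := by
  unfold MSpan
  apply le_antisymm
  · rw [AddSubgroup.closure_le]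
    intro x hx
    simp only [Set.mem_setOf_eq, Multiset.mem_add, Multiset.mem_cons, Multiset.mem_map] at hx
    have hb : b ∈ AddSubgroup.closure {x : A | x ∈ b ::ₘ s + u} :=
      AddSubgroup.subset_closure (by simp)
    rcases hx with (rfl | ⟨y, hy, rfl⟩) | hx
    · exact hb
    · exact sub_mem (AddSubgroup.subset_closure (by simp [hy])) hb
    · exact AddSubgroup.subset_closure (by simp [hx])
  · rw [AddSubgroup.closure_le]
    intro x hx
    simp only [Set.mem_setOf_eq, Multiset.mem_add, Multiset.mem_cons] at hx
    have hb : b ∈ AddSubgroup.closure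
        {x : A | x ∈ b ::ₘ Multiset.map (fun x => x - b) s + u} :=
      AddSubgroup.subset_closure (by simp)
    rcases hx with (rfl | hx) | hx
    · exact hb
    · have hxb : x - b ∈ AddSubgroup.closure
          {y : A | y ∈ b ::ₘ Multiset.map (fun x => x - b) s + u} :=
        AddSubgroup.subset_closure (by
          simp only [Set.mem_setOf_eq, Multiset.mem_add, Multiset.mem_cons, Multiset.mem_map]
          exact Or.inl (Or.inr ⟨x, hx, rfl⟩))
      have : x - b + b = x := sub_add_cancel x b
      rw [← this]
      exact add_mem hxb hb
    · exact AddSubgroup.subset_closure (by simp [hx])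

private lemma mspan_pair (a b : A) (u : Multiset A) :
    MSpan (a ::ₘ (b - a) ::ₘ u) = MSpan (a ::ₘ b ::ₘ u) := by
  have := mspan_shift a {b} u
  simpa [Multiset.cons_add, Multiset.singleton_add] using this

/-- Total version of `symb`, sending inadmissible multisets to `0`. -/
private noncomputable def symbQ (n : ℕ) (s : Multiset A) : B A n :=
  letI := Classical.propDecidable (Multiset.card s = n ∧ Adm s)
  if h : Multiset.card s = n ∧ Adm s then symb s h else 0

private lemma symbQ_eq {n : ℕ} (s : Multiset A) (h : Multiset.card s = n ∧ Adm s) :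
    symbQ n s = symb s h := by
  unfold symbQ
  exact dif_pos h

private lemma rel_ne {n : ℕ} (a b : A) (u : Multiset A) (hab : a ≠ b)
    (h : Multiset.card (a ::ₘ b ::ₘ u) = n ∧ Adm (a ::ₘ b ::ₘ u)) :
    symbQ n (a ::ₘ b ::ₘ u) =
      symbQ n (a ::ₘ (b - a) ::ₘ u) + symbQ n ((a - b) ::ₘ b ::ₘ u) := by
  have h1 : Multiset.card (a ::ₘ (b - a) ::ₘ u) = n ∧ Adm (a ::ₘ (b - a) ::ₘ u) :=
    ⟨by simpa using h.1, adm_congr (mspan_pair a b u).symm h.2⟩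
  have h2 : Multiset.card ((a - b) ::ₘ b ::ₘ u) = n ∧ Adm ((a - b) ::ₘ b ::ₘ u) := by
    have e : (a - b) ::ₘ b ::ₘ u = b ::ₘ (a - b) ::ₘ u := Multiset.cons_swap _ _ _
    refine ⟨by simpa using h.1, ?_⟩
    rw [e]
    refine adm_congr (mspan_pair b a u).symm ?_
    have e2 : b ::ₘ a ::ₘ u = a ::ₘ b ::ₘ u := Multiset.cons_swap _ _ _
    rw [e2]; exact h.2
  rw [symbQ_eq _ h, symbQ_eq _ h1, symbQ_eq _ h2]
  have key : (of (⟨a ::ₘ b ::ₘ u, h⟩ : Symb A n) - of ⟨a ::ₘ (b - a) ::ₘ u, h1⟩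
      - of ⟨(a - b) ::ₘ b ::ₘ u, h2⟩) ∈ AddSubgroup.closure (blowupRels A n) :=
    AddSubgroup.subset_closure (Or.inl ⟨a, b, u, h, h1, h2, hab, rfl⟩)
  have z : (QuotientAddGroup.mk (of (⟨a ::ₘ b ::ₘ u, h⟩ : Symb A n)
      - of ⟨a ::ₘ (b - a) ::ₘ u, h1⟩ - of ⟨(a - b) ::ₘ b ::ₘ u, h2⟩) :
      FreeAbelianGroup (Symb A n) ⧸ AddSubgroup.closure (blowupRels A n)) = 0 :=
    (QuotientAddGroup.eq_zero_iff _).2 key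
  rw [← sub_eq_zero, ← sub_sub]
  exact z

private lemma rel_eq {n : ℕ} (a : A) (u : Multiset A)
    (h : Multiset.card (a ::ₘ a ::ₘ u) = n ∧ Adm (a ::ₘ a ::ₘ u)) :
    symbQ n (a ::ₘ a ::ₘ u) = symbQ n ((0 : A) ::ₘ a ::ₘ u) := by
  have h0 : Multiset.card ((0 : A) ::ₘ a ::ₘ u) = n ∧ Adm ((0 : A) ::ₘ a ::ₘ u) := by
    refine ⟨by simpa using h.1, ?_⟩
    have e : (0 : A) ::ₘ a ::ₘ u = a ::ₘ (a - a) ::ₘ u := by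
      rw [sub_self, Multiset.cons_swap]
    rw [e]
    exact adm_congr (mspan_pair a a u).symm h.2
  rw [symbQ_eq _ h, symbQ_eq _ h0]
  have key : (of (⟨a ::ₘ a ::ₘ u, h⟩ : Symb A n) - of ⟨(0 : A) ::ₘ a ::ₘ u, h0⟩)
      ∈ AddSubgroup.closure (blowupRels A n) :=
    AddSubgroup.subset_closure (Or.inr ⟨a, u, h, h0, rfl⟩)
  have z : (QuotientAddGroup.mk (of (⟨a ::ₘ a ::ₘ u, h⟩ : Symb A n)
      - of ⟨(0 : A) ::ₘ a ::ₘ u, h0⟩) :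
      FreeAbelianGroup (Symb A n) ⧸ AddSubgroup.closure (blowupRels A n)) = 0 :=
    (QuotientAddGroup.eq_zero_iff _).2 key
  rw [← sub_eq_zero]
  exact z

private lemma coe_eraseIdx (l : List A) (i : ℕ) (hi : i < l.length) :
    (↑l : Multiset A) = l.getD i 0 ::ₘ (↑(l.eraseIdx i) : Multiset A) := by
  induction l generalizing i with
  | nil => simp at hi
  | cons x xs ih =>
    cases i with
    | zero => simp
    | succ j =>
      have hj : j < xs.length := by simpa using hi
      rw [List.getD_cons_succ, List.eraseIdx_cons_succ, ← Multiset.cons_coe,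
        ← Multiset.cons_coe, ih j hj, Multiset.cons_swap]

omit [AddCommGroup A] in
private lemma eraseIdx_map (f : A → A) (l : List A) (i : ℕ) :
    (l.map f).eraseIdx i = (l.eraseIdx i).map f := by
  induction l generalizing i with
  | nil => simp
  | cons x xs ih =>
    cases i with
    | zero => simp
    | succ j => simp [ih j]

section Main

variable {A : Type} [AddCommGroup A] [DecidableEq A]

/-- The `i`-th summand of the higher blow-up relation, as a total function. -/
private noncomputable def term (n : ℕ) (l : List A) (t : Multiset A) (i : ℕ) : B A n :=
  if l.getD i 0 ∉ l.take i then
    symbQ n (l.getD i 0 ::ₘ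
      Multiset.map (fun x => x - l.getD i 0) (↑(l.eraseIdx i) : Multiset A) + t)
  else 0

private lemma main (n : ℕ) :
    ∀ (m : ℕ) (l : List A) (t : Multiset A), l.length = m + 2 →
    (Multiset.card ((↑l : Multiset A) + t) = n ∧ Adm ((↑l : Multiset A) + t)) →
    symbQ n ((↑l : Multiset A) + t) = ∑ i ∈ Finset.range l.length, term n l t i := by
  intro m
  induction m with
  | zero =>
    intro l t hlen h
    obtain ⟨a, b, rfl⟩ := List.length_eq_two.1 hlen
    have e0 : (↑([a, b] : List A) : Multiset A) + t = a ::ₘ b ::ₘ t := by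
      rw [← Multiset.cons_coe, ← Multiset.cons_coe, Multiset.cons_add, Multiset.cons_add]
      simp
    have hT0 : term n [a, b] t 0 = symbQ n (a ::ₘ (b - a) ::ₘ t) := by
      unfold term
      rw [if_pos (by simp)]
      congr 1
      simp only [List.getD_cons_zero, List.eraseIdx_cons_zero]
      rw [show ((↑([b] : List A) : Multiset A)) = ({b} : Multiset A) by rfl]
      rw [Multiset.map_singleton, Multiset.cons_add, Multiset.singleton_add]
    have hsum : ∑ i ∈ Finset.range ([a, b] : List A).length, term n [a, b] t i
        = term n [a, b] t 0 + term n [a, b] t 1 := by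
      show ∑ i ∈ Finset.range 2, term n [a, b] t i = _
      rw [Finset.sum_range_succ, Finset.sum_range_succ, Finset.sum_range_zero, zero_add]
    rw [e0] at h ⊢
    rw [hsum, hT0]
    by_cases hab : a = b
    · subst hab
      have hT1 : term n [a, a] t 1 = 0 := by
        unfold term
        rw [if_neg (by simp)]
      rw [hT1, add_zero, rel_eq a t h]
      congr 1
      rw [sub_self, Multiset.cons_swap]
    · have hT1 : term n [a, b] t 1 = symbQ n ((a - b) ::ₘ b ::ₘ t) := by
        unfold term
        rw [if_pos (by simp [Ne.symm hab])]
        congr 1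
        simp only [List.getD_cons_succ, List.getD_cons_zero, List.eraseIdx_cons_succ,
          List.eraseIdx_cons_zero]
        rw [show ((↑([a] : List A) : Multiset A)) = ({a} : Multiset A) by rfl]
        rw [Multiset.map_singleton, Multiset.cons_add, Multiset.singleton_add,
          Multiset.cons_swap]
      rw [hT1]
      exact rel_ne a b t hab h
  | succ m ih =>
    intro l t hlen h
    obtain ⟨a, l', rfl⟩ : ∃ a l', l = a :: l' := by
      cases l with
      | nil => simp at hlen
      | cons a l' => exact ⟨a, l', rfl⟩
    have hl' : l'.length = m + 2 := by simpa using hlen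
    set c : List A := l'.map (fun x => x - a) with hc
    have e1 : (↑(a :: l') : Multiset A) + t = (↑l' : Multiset A) + (a ::ₘ t) := by
      rw [← Multiset.cons_coe, Multiset.cons_add, Multiset.add_cons]
    have ec : (↑c : Multiset A) + (a ::ₘ t)
        = a ::ₘ (Multiset.map (fun x => x - a) (↑l' : Multiset A) + t) := by
      rw [hc, ← Multiset.map_coe, Multiset.add_cons]
    have eca : a ::ₘ (Multiset.map (fun x => x - a) (↑l' : Multiset A) + t)
        = a ::ₘ Multiset.map (fun x => x - a) (↑l' : Multiset A) + t := by
      rw [Multiset.cons_add]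
    have h1 : Multiset.card ((↑l' : Multiset A) + (a ::ₘ t)) = n
        ∧ Adm ((↑l' : Multiset A) + (a ::ₘ t)) := by rw [← e1]; exact h
    have IH1 := ih l' (a ::ₘ t) hl' h1
    have h2 : Multiset.card ((↑c : Multiset A) + (a ::ₘ t)) = n
        ∧ Adm ((↑c : Multiset A) + (a ::ₘ t)) := by
      constructor
      · rw [ec]
        have := h.1
        simp only [← Multiset.cons_coe, Multiset.cons_add, Multiset.card_cons,
          Multiset.card_add, Multiset.coe_card, Multiset.card_map] at this ⊢
        omega
      · rw [ec, eca]
        refine adm_congr (mspan_shift a (↑l') t).symm ?_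
        have e2 : a ::ₘ (↑l' : Multiset A) + t = (↑(a :: l') : Multiset A) + t := by
          rw [Multiset.cons_coe]
        rw [e2]
        exact h.2
    have IH2 := ih c (a ::ₘ t) (by simp [hc, hl']) h2
    -- termwise identity
    have tw : ∀ i ∈ Finset.range l'.length,
        term n l' (a ::ₘ t) i = term n (a :: l') t (i + 1) + term n c (a ::ₘ t) i := by
      intro i hi
      rw [Finset.mem_range] at hi
      set b : A := l'.getD i 0 with hb
      set er : List A := l'.eraseIdx i with her
      set M : Multiset A := Multiset.map (fun x => x - b) (↑er : Multiset A) with hM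
      have f1 : (↑l' : Multiset A) = b ::ₘ (↑er : Multiset A) := coe_eraseIdx l' i hi
      -- value of `term n l' (a ::ₘ t) i`
      have v1 : b ::ₘ M + (a ::ₘ t) = b ::ₘ a ::ₘ (M + t) := by
        rw [Multiset.cons_add, Multiset.add_cons]
      -- getD/take/eraseIdx facts on `a :: l'` and on `c`
      have g2 : (a :: l').getD (i + 1) 0 = b := by rw [List.getD_cons_succ]
      have g3 : c.getD i 0 = b - a := by
        have hic : i < c.length := by simpa [hc] using hi
        rw [List.getD_eq_getElem _ _ hic]
        simp only [hc, List.getElem_map]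
        rw [hb, List.getD_eq_getElem _ _ hi]
      have v2 : (a :: l').getD (i + 1) 0 ::ₘ
          Multiset.map (fun x => x - (a :: l').getD (i + 1) 0)
            (↑((a :: l').eraseIdx (i + 1)) : Multiset A) + t
          = b ::ₘ (a - b) ::ₘ (M + t) := by
        rw [g2, List.eraseIdx_cons_succ, ← her, ← Multiset.cons_coe, Multiset.map_cons,
          ← hM, Multiset.cons_add, Multiset.cons_add]
      have v3 : c.getD i 0 ::ₘ
          Multiset.map (fun x => x - c.getD i 0) (↑(c.eraseIdx i) : Multiset A)
            + (a ::ₘ t) = (b - a) ::ₘ a ::ₘ (M + t) := by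
        rw [g3, hc, eraseIdx_map, ← her, ← Multiset.map_coe, Multiset.map_map]
        have : ((fun x => x - (b - a)) ∘ fun x => x - a) = fun x => x - b := by
          funext x
          simp only [Function.comp_apply]
          exact sub_sub_sub_cancel_right x b a
        rw [this, ← hM, Multiset.cons_add, Multiset.add_cons]
      have p3 : (c.getD i 0 ∉ c.take i) ↔ (b ∉ l'.take i) := by
        rw [g3, hc, ← List.map_take]
        simp only [List.mem_map, not_exists, not_and]
        constructor
        · intro hxx hmem
          exact (hb ▸ (hxx b hmem)) rfl
        · rintro hmem y hy hxy
          have : y = b := by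
            have := sub_left_injective (G := A) hxy
            exact this
          exact hmem (this ▸ hy)
      -- admissibility of the pivot symbol
      have hAdm : Multiset.card (b ::ₘ a ::ₘ (M + t)) = n
          ∧ Adm (b ::ₘ a ::ₘ (M + t)) := by
        constructor
        · have hcard := h.1
          have hle : er.length = m + 1 := by
            rw [her, List.length_eraseIdx]
            simp [hi]
            omega
          simp only [← Multiset.cons_coe, Multiset.cons_add, Multiset.card_cons,
            Multiset.card_add, Multiset.coe_card, hM, Multiset.card_map, hl', hle]
              at hcard ⊢
          omega
        · rw [← v1, hM]
          refine adm_congr (mspan_shift b (↑er) (a ::ₘ t)).symm ?_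
          have e3 : b ::ₘ (↑er : Multiset A) + (a ::ₘ t)
              = (↑(a :: l') : Multiset A) + t := by
            rw [← f1, ← Multiset.cons_coe, Multiset.cons_add, Multiset.add_cons]
          rw [e3]
          exact h.2
      by_cases hp : b ∉ l'.take i
      · by_cases hba : b = a
        · -- `term (a :: l') t (i+1) = 0`, and the other two terms agree
          have hT : term n (a :: l') t (i + 1) = 0 := by
            unfold term
            rw [if_neg (by rw [g2, List.take_succ_cons]; simp [hba])]
          rw [hT, zero_add]
          unfold term
          rw [hba] at hAdm
          rw [if_pos hp, if_pos (p3.2 hp), v3, v1, hba, sub_self]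
          exact rel_eq a (M + t) hAdm
        · unfold term
          rw [if_pos hp, if_pos (by rw [g2, List.take_succ_cons]; simp [hba, hp]),
            if_pos (p3.2 hp), v1, v2, v3]
          exact rel_ne b a (M + t) hba hAdm
      · push_neg at hp
        unfold term
        rw [if_neg (not_not.2 hp),
          if_neg (by rw [g2, List.take_succ_cons]; simp [List.mem_cons, hp]),
          if_neg (by rw [p3]; exact not_not.2 hp)]
        rw [add_zero]
    -- assemble
    have e0 : term n (a :: l') t 0 = symbQ n ((↑c : Multiset A) + (a ::ₘ t)) := by
      unfold term
      rw [if_pos (by simp)]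
      rw [show (a :: l').getD 0 0 = a from rfl, show (a :: l').eraseIdx 0 = l' from rfl,
        ← eca, ← ec]
    have lenc : c.length = l'.length := by simp [hc]
    have IH2' : ∑ i ∈ Finset.range l'.length, term n c (a ::ₘ t) i
        = symbQ n ((↑c : Multiset A) + (a ::ₘ t)) := by
      rw [IH2, lenc]
    rw [e1, IH1, Finset.sum_congr rfl tw, Finset.sum_add_distrib, IH2', ← e0]
    rw [show ((a :: l').length) = l'.length + 1 from rfl, Finset.sum_range_succ']

end Main

end Aux

/-- Prop. 8.1: for `2 ≤ r ≤ n`, the higher blow-up relation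
`(B_r)` holds in the group defined by the two-term relations `(B₂)` alone:
`[a₁,…,a_r,b₁,…,b_{n-r}]` equals the sum over the indices `i` with `a_i` distinct
from all earlier `a_{i'}` of `[a₁-a_i,…,a_i,…,a_r-a_i,b₁,…,b_{n-r}]`. -/
theorem higher_blowup_relations {A : Type} [AddCommGroup A] [DecidableEq A]
    {n r : ℕ} (hr : 2 ≤ r) (hrn : r ≤ n)
    (l : List A) (hlen : l.length = r) (t : Multiset A)
    (h : Multiset.card ((↑l : Multiset A) + t) = n ∧ Adm ((↑l : Multiset A) + t))
    (H : ∀ i : Fin l.length,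
      Multiset.card (l.get i ::ₘ (Multiset.map (fun x => x - l.get i)
          (↑(l.eraseIdx i) : Multiset A)) + t) = n ∧
      Adm (l.get i ::ₘ (Multiset.map (fun x => x - l.get i)
          (↑(l.eraseIdx i) : Multiset A)) + t)) :
    symb ((↑l : Multiset A) + t) h =
      ∑ i ∈ Finset.univ.filter (fun i : Fin l.length => l.get i ∉ l.take i.1),
        symb (l.get i ::ₘ (Multiset.map (fun x => x - l.get i)
          (↑(l.eraseIdx i) : Multiset A)) + t) (H i) := by
  obtain ⟨m, hm⟩ : ∃ m, l.length = m + 2 := ⟨l.length - 2, by omega⟩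
  have key := main n m l t hm h
  rw [show symb ((↑l : Multiset A) + t) h = symbQ n ((↑l : Multiset A) + t) from
    (symbQ_eq _ h).symm, key, Finset.sum_filter,
    ← Fin.sum_univ_eq_sum_range (fun i => term n l t i) l.length]
  apply Finset.sum_congr rfl
  intro i _
  have hget : l.getD i.1 0 = l.get i := by
    rw [List.getD_eq_getElem _ _ i.isLt, List.get_eq_getElem]
  show term n l t i.1 = _
  unfold term
  rw [hget]
  split_ifs with hcond
  · rfl
  · exact symbQ_eq _ (H i)
end

section
/- The class β(X ⟲ C_3) of the diagonal C_3-action on P^2 by (x:y:z) ↦ (x : ζ_3 y : ζ_3^2 z) equals 3·[1,2] = 0 in B_2(C_3); whereas the class of the C_3-action on the cubic surface w^3 = f_3(x,y,z) by (w:x:y:z) ↦ (ζ_3 w : x : y : z) equals [2,0] ≠ 0 in B_2(C_3). Hence these two actions are not equivariantly birational. -/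
open FreeAbelianGroup

/-- The symbol `[1,2]` in `B₂(C₃)` — the tangent weights at each of the three
fixed points of the diagonal action of `C₃` on `ℙ²`. -/
def c3_12 : B (ZMod 3) 2 :=
  symb {1, 2} ⟨by decide, admU (u := 1) (v := 1) (by decide) (by decide)⟩

/-- The symbol `[2,0]` in `B₂(C₃)` — the class of the fixed cubic curve
`{w = 0}` of the `C₃`-action on the cubic surface `w³ = f₃(x,y,z)`. -/
def c3_20 : B (ZMod 3) 2 :=
  symb {2, 0} ⟨by decide, admU (u := 2) (v := 2) (by decide) (by decide)⟩

/-- Auxiliary weight function on multisets of characters of `C₃`. -/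
def gwt : Multiset (ZMod 3) → ℤ := fun s =>
  if s = {0, 1} ∨ s = {1, 1} then 1
  else if s = {0, 2} ∨ s = {2, 2} then -1 else 0

/-- Lift of `gwt` to the free abelian group on symbols. -/
def phi : FreeAbelianGroup (Symb (ZMod 3) 2) →+ ℤ :=
  FreeAbelianGroup.lift (fun s => gwt s.1)

lemma phi_of (s : Symb (ZMod 3) 2) : phi (of s) = gwt s.1 :=
  FreeAbelianGroup.lift_apply_of _ _

lemma phi_rels : ∀ x ∈ blowupRels (ZMod 3) 2, phi x = 0 := by
  rintro x (⟨a, b, t, h, h1, h2, hab, rfl⟩ | ⟨a, t, h, h0, rfl⟩)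
  · have ht : t = 0 := by
      have := h.1
      simp only [Multiset.card_cons] at this
      exact Multiset.card_eq_zero.mp (by omega)
    subst ht
    erw [map_sub, map_sub, phi_of, phi_of, phi_of]
    have key : ∀ a b : ZMod 3, a ≠ b → gwt (a ::ₘ b ::ₘ 0) - gwt (a ::ₘ (b - a) ::ₘ 0)
        - gwt ((a - b) ::ₘ b ::ₘ 0) = 0 := by decide
    exact key a b hab
  · have ht : t = 0 := by
      have := h.1
      simp only [Multiset.card_cons] at this
      exact Multiset.card_eq_zero.mp (by omega)
    subst ht
    erw [map_sub, phi_of, phi_of]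
    have key : ∀ a : ZMod 3, gwt (a ::ₘ a ::ₘ 0) - gwt ((0 : ZMod 3) ::ₘ a ::ₘ 0) = 0 := by decide
    exact key a

lemma closure_le_ker :
    AddSubgroup.closure (blowupRels (ZMod 3) 2) ≤ phi.ker :=
  (AddSubgroup.closure_le _).2 (fun x hx => phi_rels x hx)

/-- The induced homomorphism `B₂(C₃) → ℤ`. -/
def Phi : B (ZMod 3) 2 →+ ℤ :=
  QuotientAddGroup.lift _ phi closure_le_ker

lemma Phi_symb (s : Multiset (ZMod 3)) (h : Multiset.card s = 2 ∧ Adm s) :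
    Phi (symb s h) = gwt s := phi_of _

lemma c3_12_eq_zero : c3_12 = 0 := by
  have hmem : (of (⟨(1 : ZMod 3) ::ₘ 0 ::ₘ 0,
        ⟨by decide, admU (u := 1) (v := 1) (by decide) (by decide)⟩⟩ : Symb (ZMod 3) 2)
      - of ⟨(1 : ZMod 3) ::ₘ (0 - 1) ::ₘ 0,
        ⟨by decide, admU (u := 1) (v := 1) (by decide) (by decide)⟩⟩
      - of ⟨((1 : ZMod 3) - 0) ::ₘ 0 ::ₘ 0,
        ⟨by decide, admU (u := 1) (v := 1) (by decide) (by decide)⟩⟩)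
      ∈ AddSubgroup.closure (blowupRels (ZMod 3) 2) := by
    apply AddSubgroup.subset_closure
    left
    exact ⟨1, 0, 0, _, _, _, by decide, rfl⟩
  have hq : QuotientAddGroup.mk (s := AddSubgroup.closure (blowupRels (ZMod 3) 2))
      (of (⟨(1 : ZMod 3) ::ₘ 0 ::ₘ 0,
        ⟨by decide, admU (u := 1) (v := 1) (by decide) (by decide)⟩⟩ : Symb (ZMod 3) 2)
      - of ⟨(1 : ZMod 3) ::ₘ (0 - 1) ::ₘ 0,
        ⟨by decide, admU (u := 1) (v := 1) (by decide) (by decide)⟩⟩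
      - of ⟨((1 : ZMod 3) - 0) ::ₘ 0 ::ₘ 0,
        ⟨by decide, admU (u := 1) (v := 1) (by decide) (by decide)⟩⟩) = 0 :=
    (QuotientAddGroup.eq_zero_iff _).2 hmem
  have e1 : (⟨(1 : ZMod 3) ::ₘ (0 - 1) ::ₘ 0,
        ⟨by decide, admU (u := 1) (v := 1) (by decide) (by decide)⟩⟩ : Symb (ZMod 3) 2)
      = ⟨{1, 2}, ⟨by decide, admU (u := 1) (v := 1) (by decide) (by decide)⟩⟩ :=
    Subtype.ext (by decide)
  have e2 : (⟨((1 : ZMod 3) - 0) ::ₘ 0 ::ₘ 0,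
        ⟨by decide, admU (u := 1) (v := 1) (by decide) (by decide)⟩⟩ : Symb (ZMod 3) 2)
      = ⟨(1 : ZMod 3) ::ₘ 0 ::ₘ 0, ⟨by decide, admU (u := 1) (v := 1) (by decide) (by decide)⟩⟩ :=
    Subtype.ext (by decide)
  rw [e1, e2] at hq
  have habel : of (⟨(1 : ZMod 3) ::ₘ 0 ::ₘ 0,
        ⟨by decide, admU (u := 1) (v := 1) (by decide) (by decide)⟩⟩ : Symb (ZMod 3) 2)
      - of ⟨{1, 2}, ⟨by decide, admU (u := 1) (v := 1) (by decide) (by decide)⟩⟩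
      - of (⟨(1 : ZMod 3) ::ₘ 0 ::ₘ 0,
        ⟨by decide, admU (u := 1) (v := 1) (by decide) (by decide)⟩⟩ : Symb (ZMod 3) 2)
      = -of ⟨{1, 2}, ⟨by decide, admU (u := 1) (v := 1) (by decide) (by decide)⟩⟩ := by
    abel
  erw [habel, QuotientAddGroup.mk_neg, neg_eq_zero] at hq
  exact hq

/-- `β(ℙ² ⟲ C₃) = 3·[1,2] = 0` while `β(cubic ⟲ C₃) = [2,0] ≠ 0`
in `𝓑₂(C₃)`; in particular the two invariants differ, so the two actions are
not equivariantly birational. -/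
theorem P2_vs_cubic_surface_C3 :
    3 • c3_12 = 0 ∧ c3_20 ≠ 0 ∧ 3 • c3_12 ≠ c3_20 := by
  have h12 : c3_12 = 0 := c3_12_eq_zero
  have h20 : Phi c3_20 = -1 := by
    have := Phi_symb {2, 0} ⟨by decide, admU (u := 2) (v := 2) (by decide) (by decide)⟩
    unfold c3_20
    rw [this]
    decide
  have hne : c3_20 ≠ 0 := by
    intro h
    rw [h, map_zero] at h20
    exact absurd h20 (by decide)
  refine ⟨by rw [h12, smul_zero], hne, ?_⟩
  rw [h12, smul_zero]
  exact fun h => hne h.symm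
end

section
/- In Burn_2^{nontriv}(C_4), the subgroup generated by classes of points and rational curves is isomorphic to Z^2, freely generated by [1,2] := (C_4, k, (1,2)) and [2,3] := (C_4, k, (2,3)); moreover [1,3] = 0, [0,3] = [3,3] = -[1,2]+[2,3], [0,1] = [1,1] = [1,2]-[2,3], (C_2, C_2 ⟲ k(t), 1) = -[1,2]-[2,3], and the classes (C_2, C_2 ⟲ k²(t), 1) and (C_2, C_2 ⟲ k², (1,1)) vanish. -/
open FreeAbelianGroup

/-- Generators of the points-and-rational-curves part of `Burn₂ⁿᵒⁿᵗʳⁱᵛ(C₄)`: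
the point classes `[i,j] = (C₄, k, (i,j))`, the curve classes
`[1,0] = (C₄, k(t), 1)` and `[3,0] = (C₄, k(t), 3)`, and the classes
`a = (C₂, C₂ ⟲ k(t), 1)`, `b = (C₂, C₂ ⟲ k², (1,1))`, `c = (C₂, C₂ ⟲ k²(t), 1)`. -/
inductive Gen13
  | s11 | s12 | s13 | s23 | s33 | s10 | s30 | a | b | c
  deriving DecidableEq

open Gen13

/-- The blow-up relations of the presentation, written as elements
`lhs - rhs` of the free abelian group:
`[0,1]=[0,1]+[1,3]`, `[0,3]=[0,3]+[1,3]`, `[1,1]=[1,0]`, `[1,2]=[1,1]+[2,3]`,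
`[1,3]=[1,2]+[2,3]+a`, `[2,3]=[1,2]+[3,3]`, `[3,3]=[3,0]`, `b=c`, `a=a+c`,
`c=c+c`. -/
def rels13 : Set (FreeAbelianGroup Gen13) :=
  { of s13,
    of s11 - of s10,
    of s12 - of s11 - of s23,
    of s13 - of s12 - of s23 - of a,
    of s23 - of s12 - of s33,
    of s33 - of s30,
    of b - of c,
    of c }

/-- The points-and-rational-curves subgroup of `Burn₂ⁿᵒⁿᵗʳⁱᵛ(C₄)`. -/
def Burn13 : Type := FreeAbelianGroup Gen13 ⧸ AddSubgroup.closure rels13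

instance : AddCommGroup Burn13 := by unfold Burn13; infer_instance

/-- The class of a generator. -/
def cls (g : Gen13) : Burn13 := QuotientAddGroup.mk (of g)

/-! Auxiliary material -/

/-- The values of the generators in `ℤ × ℤ`. -/
def fval : Gen13 → ℤ × ℤ
  | Gen13.s11 => (1, -1)
  | Gen13.s12 => (1, 0)
  | Gen13.s13 => (0, 0)
  | Gen13.s23 => (0, 1)
  | Gen13.s33 => (-1, 1)
  | Gen13.s10 => (1, -1)
  | Gen13.s30 => (-1, 1)
  | Gen13.a => (-1, -1)
  | Gen13.b => (0, 0)
  | Gen13.c => (0, 0)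

def Fhom : FreeAbelianGroup Gen13 →+ ℤ × ℤ := FreeAbelianGroup.lift fval

lemma Fhom_vanish : ∀ r ∈ rels13, Fhom r = 0 := by
  intro r hr
  simp only [rels13, Set.mem_insert_iff, Set.mem_singleton_iff] at hr
  rcases hr with rfl | rfl | rfl | rfl | rfl | rfl | rfl | rfl <;>
    simp [Fhom, fval, Prod.ext_iff]

lemma closure_le_ker_s13 : AddSubgroup.closure rels13 ≤ Fhom.ker :=
  (AddSubgroup.closure_le _).mpr fun r hr => Fhom_vanish r hr

/-- The descended homomorphism `Burn13 →+ ℤ × ℤ`. -/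
def Fbar : Burn13 →+ ℤ × ℤ :=
  QuotientAddGroup.lift _ Fhom fun x hx => closure_le_ker_s13 hx

lemma Fbar_cls (g : Gen13) : Fbar (cls g) = fval g := by
  show Fhom (of g) = fval g
  simp [Fhom]

/-- The inverse map. -/
def Hhom : ℤ × ℤ →+ Burn13 :=
  ((zmultiplesHom Burn13 (cls s12)).comp (AddMonoidHom.fst ℤ ℤ)) +
  ((zmultiplesHom Burn13 (cls s23)).comp (AddMonoidHom.snd ℤ ℤ))

lemma Hhom_apply (m n : ℤ) : Hhom (m, n) = m • cls s12 + n • cls s23 := rfl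

lemma rel_zero {r : FreeAbelianGroup Gen13} (hr : r ∈ rels13) :
    (QuotientAddGroup.mk r : Burn13) = 0 :=
  (QuotientAddGroup.eq_zero_iff _).2 (AddSubgroup.subset_closure hr)

lemma rel_zero' {r : FreeAbelianGroup Gen13} (hr : r ∈ rels13) :
    (QuotientAddGroup.mk' (AddSubgroup.closure rels13) r : Burn13) = 0 :=
  rel_zero hr

lemma cls_s13 : cls s13 = 0 := rel_zero (by simp [rels13])

lemma cls_c : cls c = 0 := rel_zero (by simp [rels13])

lemma cls_b : cls b = 0 := by
  have h := rel_zero' (r := of b - of c) (by simp [rels13])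
  rw [map_sub] at h
  have : cls b - cls c = 0 := h
  rw [cls_c, sub_zero] at this
  exact this

lemma cls_s10 : cls s10 = cls s11 := by
  have h := rel_zero' (r := of s11 - of s10) (by simp [rels13])
  rw [map_sub] at h
  have : cls s11 - cls s10 = 0 := h
  linear_combination (norm := abel) -this

lemma cls_s11 : cls s11 = cls s12 - cls s23 := by
  have h := rel_zero' (r := of s12 - of s11 - of s23) (by simp [rels13])
  rw [map_sub, map_sub] at h
  have : cls s12 - cls s11 - cls s23 = 0 := h
  linear_combination (norm := abel) -this

lemma cls_a : cls a = -cls s12 - cls s23 := by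
  have h := rel_zero' (r := of s13 - of s12 - of s23 - of a) (by simp [rels13])
  rw [map_sub, map_sub, map_sub] at h
  have : cls s13 - cls s12 - cls s23 - cls a = 0 := h
  rw [cls_s13] at this
  linear_combination (norm := abel) -this

lemma cls_s33 : cls s33 = -cls s12 + cls s23 := by
  have h := rel_zero' (r := of s23 - of s12 - of s33) (by simp [rels13])
  rw [map_sub, map_sub] at h
  have : cls s23 - cls s12 - cls s33 = 0 := h
  linear_combination (norm := abel) -this

lemma cls_s30 : cls s30 = cls s33 := by
  have h := rel_zero' (r := of s33 - of s30) (by simp [rels13])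
  rw [map_sub] at h
  have : cls s33 - cls s30 = 0 := h
  linear_combination (norm := abel) -this

lemma H_F_cls (g : Gen13) : Hhom (Fbar (cls g)) = cls g := by
  rw [Fbar_cls]
  cases g <;>
    simp only [fval, Hhom_apply, one_smul, zero_smul, neg_smul, add_zero, zero_add,
      cls_s13, cls_c, cls_b, cls_s10, cls_s11, cls_a, cls_s33, cls_s30] <;>
    abel

lemma left_inv : ∀ x : Burn13, Hhom (Fbar x) = x := by
  intro x
  induction x using QuotientAddGroup.induction_on with
  | H z =>
    induction z using FreeAbelianGroup.induction_on with
    | zero => exact (show Hhom (Fbar (0 : Burn13)) = 0 by simp)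
    | of g => exact H_F_cls g
    | neg g ih =>
      have : ((QuotientAddGroup.mk (-of g) : Burn13)) = -QuotientAddGroup.mk (of g) := rfl
      have e : ∀ u : Burn13, Hhom (Fbar u) = u → Hhom (Fbar (-u)) = -u := fun u hu => by
        rw [map_neg, map_neg, hu]
      exact e (cls g) (H_F_cls g)
    | add y z ihy ihz =>
      have : ((QuotientAddGroup.mk (y + z) : Burn13)) =
          QuotientAddGroup.mk y + QuotientAddGroup.mk z := rfl
      have e : ∀ u v : Burn13, Hhom (Fbar u) = u → Hhom (Fbar v) = v →
          Hhom (Fbar (u + v)) = u + v := fun u v hu hv => by rw [map_add, map_add, hu, hv]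
      exact e (QuotientAddGroup.mk y) (QuotientAddGroup.mk z) ihy ihz

lemma right_inv : ∀ p : ℤ × ℤ, Fbar (Hhom p) = p := by
  rintro ⟨m, n⟩
  rw [Hhom_apply, map_add, map_zsmul, map_zsmul, Fbar_cls, Fbar_cls]
  simp [fval, Prod.ext_iff]

/-- this group is `≅ ℤ²`, freely generated by `[1,2]` and `[2,3]`,
with `[1,3] = 0`, `[0,3] = [3,3] = -[1,2]+[2,3]`, `[0,1] = [1,1] = [1,2]-[2,3]`,
`(C₂,C₂⟲k(t),1) = -[1,2]-[2,3]`, and `(C₂,C₂⟲k²(t),1) = (C₂,C₂⟲k²,(1,1)) = 0`. -/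
theorem Burn2_C4_points_and_curves :
    (∃ φ : Burn13 ≃+ ℤ × ℤ, φ (cls s12) = (1, 0) ∧ φ (cls s23) = (0, 1)) ∧
    cls s13 = 0 ∧
    cls s30 = cls s33 ∧ cls s33 = -cls s12 + cls s23 ∧
    cls s10 = cls s11 ∧ cls s11 = cls s12 - cls s23 ∧
    cls a = -cls s12 - cls s23 ∧
    cls c = 0 ∧ cls b = 0 := by
  refine ⟨⟨⟨⟨Fbar, Hhom, left_inv, right_inv⟩, Fbar.map_add⟩, ?_, ?_⟩,
      cls_s13, cls_s30, cls_s33, cls_s10, cls_s11, cls_a, cls_c, cls_b⟩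
  · exact Fbar_cls s12
  · exact Fbar_cls s23
end

section
/- In Burn_2(D_6) for the dihedral group D_6 of order 12, the symbol s := (C_2, S_3 ⟲ k(P^1), (1)) — the class of a rational curve with stabilizer the central C_2 and nontrivial residual S_3-action — is independent of all other generators: no nontrivial multiple of s is expressible as a Z-linear combination of the other generators modulo the listed relations. Consequently, the two D_6-actions (on P^2, contributing 2s, and on the quadric model of the sextic del Pezzo surface, contributing 1·s) have distinct classes in Burn_2(D_6). -/
open FreeAbelianGroup

/-- Generators of (the relevant part of) `Burn₂(D₆)` for the dihedral group
`D₆` of order 12, following §7.5 of the paper.  The distinguished generator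
`s = (C₂, 𝔖₃ ⟲ k(ℙ¹), (1))` is the class of a rational curve with stabilizer
the central `C₂` and nontrivial residual `𝔖₃`-action. -/
inductive Gen19
  | c6K                  -- (C₆, ⟨σ̄⟩ ⟲ K, (1))
  | c6k2 (j : Fin 4)     -- (C₆, ⟨σ̄⟩ ⟲ k², (1, j+1))
  | c6k2_23              -- (C₆, ⟨σ̄⟩ ⟲ k², (2,3))
  | c6k2t                -- (C₆, ⟨σ̄⟩ ⟲ k²(t), (1))
  | c2k2t3               -- (C₂, ⟨ρ̄,σ̄⟩ ⟲ k²(t), (1)), ρ̄ acting by cube roots of 1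
  | c3k2t                -- (C₃, ⟨ρ̄,σ̄⟩ ⟲ k²(t), (1)), ρ̄ acting by -1
  | d2_12 | d2_13 | d2_23  -- (D₂, triv ⟲ k, (a₁,a₂))
  | c2k3t                -- (C₂, ⟨ρ̄,σ̄⟩ ⟲ k³(t), (1))
  | sKt                  -- (S, C₂ ⟲ k(t), (1))
  | spKt                 -- (S', C₂ ⟲ k(t), (1))
  | c3K                  -- (C₃, ⟨ρ̄,σ̄⟩ ⟲ K, (1))
  | c3k4                 -- (C₃, ⟨ρ̄,σ̄⟩ ⟲ k⁴, (1,1))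
  | c3k4t                -- (C₃, ⟨ρ̄,σ̄⟩ ⟲ k⁴(t), (1))
  | s                    -- (C₂, ⟨ρ̄,σ̄⟩ ⟲ k(ℙ¹), (1)) : the distinguished symbol
  | c2k6t                -- (C₂, ⟨ρ̄,σ̄⟩ ⟲ k⁶(t), (1))
  | sK                   -- (S, C₂ ⟲ K, (1))
  | spK                  -- (S', C₂ ⟲ K, (1))
  | sk2t                 -- (S, C₂ ⟲ k²(t), (1))
  | spk2t                -- (S', C₂ ⟲ k²(t), (1))
  | trivX                -- (triv, D₆ ⟲ k(X), triv)
  deriving DecidableEq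

open Gen19

/-- The blow-up relations of `Burn₂(D₆)` listed in §7.5, written as elements
`lhs - rhs` of the free abelian group on the generators. -/
def rels19 : Set (FreeAbelianGroup Gen19) :=
  { of (c6k2 0) - of c6k2t,
    of (c6k2 1) - of (c6k2 0) - of (c6k2 3),
    of (c6k2 2) - of (c6k2 1) - of c6k2_23 - of c2k2t3,
    of (c6k2 3) - of (c6k2 2) - of c6k2_23 - of c3k2t,
    2 • of (c6k2 3) + of c2k2t3,
    of c6k2_23 - of (c6k2 1) - of (c6k2 2),
    of d2_12 - of d2_13 - of d2_23 - of spKt,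
    of d2_13 - of d2_12 - of d2_23 - of c2k3t,
    of d2_23 - of d2_12 - of d2_13 - of sKt,
    of c3k4 - of c3k4t,
    2 • of c3k4,
    of c2k6t,
    of sk2t,
    of spk2t }

/-- (The relevant part of) `Burn₂(D₆)`. -/
def Burn19 : Type := FreeAbelianGroup Gen19 ⧸ AddSubgroup.closure rels19

instance : AddCommGroup Burn19 := by unfold Burn19; infer_instance

def cls19 (g : Gen19) : Burn19 := QuotientAddGroup.mk (of g)

/-- Coefficient of `s` as a hom on the free abelian group. -/
def coeffS : FreeAbelianGroup Gen19 →+ ℤ :=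
  FreeAbelianGroup.lift (fun g => if g = s then 1 else 0)

lemma coeffS_of (g : Gen19) : coeffS (of g) = if g = s then 1 else 0 :=
  by simp [coeffS]

lemma rels_ker : AddSubgroup.closure rels19 ≤ coeffS.ker := by
  rw [AddSubgroup.closure_le]
  intro x hx
  simp only [rels19, Set.mem_insert_iff, Set.mem_singleton_iff] at hx
  rcases hx with h|h|h|h|h|h|h|h|h|h|h|h|h|h <;> subst h <;>
    simp [AddMonoidHom.mem_ker, coeffS_of]

/-- Coefficient of `s` descends to `Burn19`. -/
def coeffSQ : Burn19 →+ ℤ :=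
  QuotientAddGroup.lift (AddSubgroup.closure rels19) coeffS rels_ker

lemma coeffSQ_cls (g : Gen19) : coeffSQ (cls19 g) = if g = s then 1 else 0 :=
  coeffS_of g

lemma coeffSQ_zero_of_mem {x : Burn19}
    (hx : x ∈ AddSubgroup.closure (cls19 '' {g : Gen19 | g ≠ s})) :
    coeffSQ x = 0 := by
  induction hx using AddSubgroup.closure_induction with
  | mem y hy =>
    obtain ⟨g, hg, rfl⟩ := hy
    rw [coeffSQ_cls, if_neg hg]
  | zero => simp
  | add a b _ _ ha hb => simp [ha, hb]
  | neg a _ ha => simp [ha]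

/-- in `Burn₂(D₆)` the symbol `s = (C₂, 𝔖₃ ⟲ k(ℙ¹), (1))` is
independent of all other generators: no nonzero multiple of `s` lies in the
subgroup generated by the other generators.  Consequently the classes of the
two `D₆`-actions of Iskovskikh — contributing `2s + (other symbols)` on `ℙ²`
and `1·s + (other symbols)` on the quadric model — are distinct. -/
theorem s_independent_in_Burn2_D6 :
    (∀ m : ℤ, m ≠ 0 →
      m • cls19 s ∉ AddSubgroup.closure (cls19 '' {g : Gen19 | g ≠ s})) ∧
    (∀ x y : Burn19, x ∈ AddSubgroup.closure (cls19 '' {g : Gen19 | g ≠ s}) →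
      y ∈ AddSubgroup.closure (cls19 '' {g : Gen19 | g ≠ s}) →
      2 • cls19 s + x ≠ cls19 s + y) := by
  constructor
  · intro m hm hmem
    have h1 : coeffSQ (m • cls19 s) = m := by
      simp [coeffSQ_cls]
    have h2 := coeffSQ_zero_of_mem hmem
    rw [h1] at h2
    exact hm h2
  · intro x y hx hy h
    have := congrArg coeffSQ h
    simp [coeffSQ_cls, coeffSQ_zero_of_mem hx, coeffSQ_zero_of_mem hy] at this
end
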